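/- Let n > 1 and let ρ ∈ ℂ be a primitive n-th root of unity. Let G be the kernel of the surjective group homomorphism (ℤ/nℤ)³ → ℤ/nℤ, (a,b,c) ↦ a+b+c, acting on the polynomial ring ℂ[x,y,z] by (a,b,c)·x = ρ^a x, (a,b,c)·y = ρ^b y, (a,b,c)·z = ρ^c z (extended as ℂ-algebra automorphisms). Then the ring of invariants ℂ[x,y,z]^G equals the ℂ-subalgebra generated by x^n, y^n, z^n and xyz. -/

import Mathlib

open MvPolynomial

private lemma aeval_smul_monomial (c : Fin 3 → ℂ) (d : Fin 3 →₀ ℕ) (a : ℂ) :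
    aeval (fun i => c i • (X i : MvPolynomial (Fin 3) ℂ)) (monomial d a) =
      (∏ i : Fin 3, c i ^ d i) • monomial d a := by
  rw [aeval_monomial, Finsupp.prod_pow]
  have : ∀ i : Fin 3, (c i • (X i : MvPolynomial (Fin 3) ℂ)) ^ d i
      = C (c i ^ d i) * X i ^ d i := by
    intro i
    rw [smul_pow, smul_eq_C_mul]
  simp_rw [this]
  rw [Finset.prod_mul_distrib, ← map_prod, monomial_eq, Finsupp.prod_pow,
    smul_eq_C_mul, algebraMap_eq]
  ring

private lemma coeff_aeval_smul (c : Fin 3 → ℂ) (p : MvPolynomial (Fin 3) ℂ) (d : Fin 3 →₀ ℕ) :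
    coeff d (aeval (fun i => c i • (X i : MvPolynomial (Fin 3) ℂ)) p) =
      (∏ i : Fin 3, c i ^ d i) * coeff d p := by
  induction p using MvPolynomial.induction_on' with
  | monomial d' a =>
    rw [aeval_smul_monomial, coeff_smul, smul_eq_mul, coeff_monomial]
    split_ifs with h
    · subst h; rfl
    · ring
  | add p q hp hq =>
    rw [map_add, coeff_add, coeff_add, hp, hq]; ring

/-- For `n > 1` and `ρ` a primitive `n`-th root of unity, the invariants of
`ℂ[x,y,z]` under the action of `G = ker((ℤ/n)³ → ℤ/n, (a,b,c) ↦ a+b+c)`, where `(a,b,c)`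
acts by `x ↦ ρ^a x`, `y ↦ ρ^b y`, `z ↦ ρ^c z`, form the subalgebra generated by
`x^n, y^n, z^n, xyz`. -/
theorem invariants_eq_adjoin (n : ℕ) (hn : 1 < n) (ρ : ℂ) (hρ : IsPrimitiveRoot ρ n) :
    {p : MvPolynomial (Fin 3) ℂ |
      ∀ g : Fin 3 → ZMod n, g 0 + g 1 + g 2 = 0 →
        MvPolynomial.aeval (fun i : Fin 3 => (ρ ^ (g i).val) • (MvPolynomial.X i)) p = p} =
    ↑(Algebra.adjoin ℂ
        ({(MvPolynomial.X 0 : MvPolynomial (Fin 3) ℂ) ^ n, (MvPolynomial.X 1) ^ n,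
          (MvPolynomial.X 2) ^ n,
          (MvPolynomial.X 0) * (MvPolynomial.X 1) * (MvPolynomial.X 2)} :
          Set (MvPolynomial (Fin 3) ℂ))) := by
  have hn0 : NeZero n := ⟨by omega⟩
  ext p
  simp only [Set.mem_setOf_eq, SetLike.mem_coe]
  constructor
  · -- forward: invariant → in adjoin
    intro hp
    rw [p.as_sum]
    apply Subalgebra.sum_mem
    intro d hd
    have hcoeff : coeff d p ≠ 0 := mem_support_iff.mp hd
    -- derive the divisibility condition
    have key : ∀ g : Fin 3 → ZMod n, g 0 + g 1 + g 2 = 0 →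
        ((g 0) * (d 0) + (g 1) * (d 1) + (g 2) * (d 2) : ZMod n) = 0 := by
      intro g hg
      have h1 := congrArg (coeff d) (hp g hg)
      rw [coeff_aeval_smul] at h1
      have h2 : (∏ i : Fin 3, (ρ ^ (g i).val) ^ d i) = 1 :=
        mul_right_cancel₀ hcoeff (h1.trans (one_mul (coeff d p)).symm)
      rw [Fin.prod_univ_three, ← pow_mul, ← pow_mul, ← pow_mul, ← pow_add, ← pow_add,
        hρ.pow_eq_one_iff_dvd] at h2
      have h3 : (((g 0).val * d 0 + (g 1).val * d 1 + (g 2).val * d 2 : ℕ) : ZMod n) = 0 :=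
        (ZMod.natCast_eq_zero_iff _ n).mpr h2
      push_cast at h3
      simpa [ZMod.natCast_val, ZMod.cast_id] using h3
    have e01 : ((d 0 : ZMod n)) = (d 1 : ZMod n) := by
      have := key ![1, -1, 0] (by simp)
      simp only [Matrix.cons_val_zero, Matrix.cons_val_one, Matrix.head_cons,
        Matrix.cons_val_two, Matrix.tail_cons] at this
      linear_combination this
    have e12 : ((d 1 : ZMod n)) = (d 2 : ZMod n) := by
      have := key ![0, 1, -1] (by simp)
      simp only [Matrix.cons_val_zero, Matrix.cons_val_one, Matrix.head_cons,
        Matrix.cons_val_two, Matrix.tail_cons] at this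
      linear_combination this
    -- m = min exponent
    set m := min (d 0) (min (d 1) (d 2)) with hm
    have hmle : ∀ i : Fin 3, m ≤ d i := by
      intro i
      fin_cases i <;> simp [hm]
    have hmcast : (m : ZMod n) = (d 0 : ZMod n) := by
      rcases Nat.le_total (d 0) (min (d 1) (d 2)) with h | h
      · simp [hm, min_eq_left h]
      · rw [hm, min_eq_right h]
        rcases Nat.le_total (d 1) (d 2) with h' | h'
        · rw [min_eq_left h', e01]
        · rw [min_eq_right h', e01, e12]
    have hdvd : ∀ i : Fin 3, n ∣ d i - m := by
      intro i
      rw [← Nat.modEq_iff_dvd' (hmle i), ← ZMod.natCast_eq_natCast_iff]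
      fin_cases i
      · simpa using hmcast
      · simpa [← e01] using hmcast
      · simpa [← e01, ← e12] using hmcast
    choose k hk using hdvd
    have hd' : ∀ i : Fin 3, d i = m + n * k i := by
      intro i
      have h1 := hk i
      have h2 := hmle i
      omega
    have hrepr : (monomial d (coeff d p) : MvPolynomial (Fin 3) ℂ) =
        C (coeff d p) * ((X 0 * X 1 * X 2) ^ m *
          ((X 0 ^ n) ^ k 0 * ((X 1 ^ n) ^ k 1 * (X 2 ^ n) ^ k 2))) := by
      rw [monomial_eq, Finsupp.prod_pow, Fin.prod_univ_three, hd' 0, hd' 1, hd' 2]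
      ring
    rw [hrepr]
    have h0 : (X 0 : MvPolynomial (Fin 3) ℂ) ^ n ∈ Algebra.adjoin ℂ
        ({X 0 ^ n, X 1 ^ n, X 2 ^ n, X 0 * X 1 * X 2} : Set (MvPolynomial (Fin 3) ℂ)) :=
      Algebra.subset_adjoin (by simp)
    have h1 : (X 1 : MvPolynomial (Fin 3) ℂ) ^ n ∈ Algebra.adjoin ℂ
        ({X 0 ^ n, X 1 ^ n, X 2 ^ n, X 0 * X 1 * X 2} : Set (MvPolynomial (Fin 3) ℂ)) :=
      Algebra.subset_adjoin (by simp)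
    have h2 : (X 2 : MvPolynomial (Fin 3) ℂ) ^ n ∈ Algebra.adjoin ℂ
        ({X 0 ^ n, X 1 ^ n, X 2 ^ n, X 0 * X 1 * X 2} : Set (MvPolynomial (Fin 3) ℂ)) :=
      Algebra.subset_adjoin (by simp)
    have h3 : (X 0 * X 1 * X 2 : MvPolynomial (Fin 3) ℂ) ∈ Algebra.adjoin ℂ
        ({X 0 ^ n, X 1 ^ n, X 2 ^ n, X 0 * X 1 * X 2} : Set (MvPolynomial (Fin 3) ℂ)) :=
      Algebra.subset_adjoin (by simp)
    refine mul_mem ?_ (mul_mem (pow_mem h3 m) (mul_mem (pow_mem h0 _)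
      (mul_mem (pow_mem h1 _) (pow_mem h2 _))))
    rw [← algebraMap_eq]
    exact Subalgebra.algebraMap_mem _ _
  · -- reverse: adjoin → invariant
    intro hp g hg
    have hval : ρ ^ ((g 0).val + (g 1).val + (g 2).val) = 1 := by
      rw [hρ.pow_eq_one_iff_dvd, ← ZMod.natCast_eq_zero_iff]
      push_cast
      simpa [ZMod.natCast_val, ZMod.cast_id] using hg
    induction hp using Algebra.adjoin_induction with
    | mem q hq =>
      simp only [Set.mem_insert_iff, Set.mem_singleton_iff] at hq
      have hXpow : ∀ i : Fin 3, (aeval fun i : Fin 3 => (ρ ^ (g i).val) • (X i : MvPolynomial (Fin 3) ℂ)) ((X i : MvPolynomial (Fin 3) ℂ) ^ n) = X i ^ n := by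
        intro i
        rw [map_pow, aeval_X, smul_pow, ← pow_mul, mul_comm, pow_mul, hρ.pow_eq_one, one_pow,
          one_smul]
      rcases hq with h | h | h | h
      · rw [h]; exact hXpow 0
      · rw [h]; exact hXpow 1
      · rw [h]; exact hXpow 2
      · rw [h, map_mul, map_mul, aeval_X, aeval_X, aeval_X,
          smul_mul_smul_comm, smul_mul_smul_comm, ← pow_add, ← pow_add, hval, one_smul]
    | algebraMap a => simp
    | add x y hx hy hx' hy' => rw [map_add, hx', hy']
    | mul x y hx hy hx' hy' => rw [map_mul, hx', hy']
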